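/- Let n = 1, s = 1/2, and u₁ ∈ L¹(ℝ) ∩ L²(ℝ), u₀ ∈ L²(ℝ). Define û(t,ξ) = (sin(t|ξ|^{1/2})/|ξ|^{1/2})û₁(ξ) + cos(t|ξ|^{1/2})û₀(ξ). Then there exists T > 1 such that for all t ≥ T, ∫_ℝ |û(t,ξ)|² dξ ≤ 4(‖û₀‖₂² + ‖û₁‖₂² + ‖u₁‖₁²) log t. -/

import Mathlib

open MeasureTheory Real

lemma u1hat_bound (u₁ : ℝ → ℂ) (u1hat : ℝ → ℂ)
    (hu1hat : ∀ ξ, u1hat ξ = ∫ x : ℝ, Complex.exp (-Complex.I * x * ξ) * u₁ x) (ξ : ℝ) :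
    ‖u1hat ξ‖ ≤ ∫ x, ‖u₁ x‖ := by
  rw [hu1hat]
  refine (norm_integral_le_integral_norm _).trans_eq ?_
  congr 1; ext x
  rw [norm_mul, Complex.norm_exp]
  simp [Complex.mul_re]

lemma u1hat_cont (u₁ : ℝ → ℂ) (hu₁ : Integrable u₁) (u1hat : ℝ → ℂ)
    (hu1hat : ∀ ξ, u1hat ξ = ∫ x : ℝ, Complex.exp (-Complex.I * x * ξ) * u₁ x) :
    Continuous u1hat := by
  have : Continuous fun ξ : ℝ => ∫ x : ℝ, Complex.exp (-Complex.I * x * ξ) * u₁ x := by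
    apply continuous_of_dominated (bound := fun x => ‖u₁ x‖)
    · intro ξ
      exact (Complex.continuous_exp.comp (by fun_prop)).aestronglyMeasurable.mul
        hu₁.aestronglyMeasurable
    · intro ξ
      filter_upwards with x
      rw [norm_mul, Complex.norm_exp]
      simp [Complex.mul_re]
    · exact hu₁.norm
    · filter_upwards with x
      exact Complex.continuous_exp.comp (by fun_prop) |>.mul continuous_const
  simpa [← hu1hat] using this.congr fun ξ => (hu1hat ξ).symm


lemma gaussian_bound (u₁ : ℝ → ℂ) (hu₁ : Integrable u₁) (hu₁2 : MemLp u₁ 2)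
    (u1hat : ℝ → ℂ)
    (hu1hat : ∀ ξ, u1hat ξ = ∫ x : ℝ, Complex.exp (-Complex.I * x * ξ) * u₁ x)
    {ε : ℝ} (hε : 0 < ε) :
    ∫ ξ : ℝ, ‖u1hat ξ‖ ^ 2 * Real.exp (-ε * ξ ^ 2) ≤ 2 * π * ∫ x : ℝ, ‖u₁ x‖ ^ 2 := by
  have hπ : (0:ℝ) < π := Real.pi_pos
  set g : ℝ → ℝ := fun z => (π/ε) ^ (1/2:ℝ) * Real.exp (-(1/(4*ε)) * z^2) with hgdef
  have hgc : Continuous g := by fun_prop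
  have hg0 : ∀ z, 0 ≤ g z := fun z => by positivity
  have hgint : Integrable g := ((integrable_exp_neg_mul_sq (by positivity)).const_mul _)
  have hgtot : ∫ z, g z = 2 * π := by
    rw [hgdef, integral_const_mul, integral_gaussian, ← Real.sqrt_eq_rpow,
      ← Real.sqrt_mul (by positivity),
      show π / ε * (π / (1/(4*ε))) = (2*π)^2 by field_simp; ring]
    exact Real.sqrt_sq (by positivity)
  have hN2 : Integrable (fun x : ℝ => ‖u₁ x‖ ^ 2) := by
    have := hu₁2.integrable_norm_rpow two_ne_zero ENNReal.ofNat_ne_top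
    simpa [ENNReal.toReal_ofNat, Real.rpow_natCast] using this
  have hconj : AEStronglyMeasurable (fun x : ℝ => (starRingEnd ℂ) (u₁ x)) volume :=
    RCLike.continuous_conj.comp_aestronglyMeasurable hu₁.1
  -- the inner Gaussian integral
  have hinner : ∀ x y : ℝ,
      ∫ ξ : ℝ, Complex.exp (Complex.I * ((y:ℂ) - x) * ξ) * Complex.exp (-(ε:ℂ) * ξ^2)
      = ((g (y - x) : ℝ) : ℂ) := by
    intro x y
    rw [fourierIntegral_gaussian (by simpa using hε) ((y:ℂ) - x),
      show ((π:ℂ)/ε) = (((π/ε : ℝ)):ℂ) by push_cast; ring,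
      show ((1:ℂ)/2) = (((1/2 : ℝ)):ℂ) by push_cast; ring,
      ← Complex.ofReal_cpow (by positivity),
      show -((y:ℂ) - x)^2/(4*ε) = (((-(1/(4*ε)) * (y-x)^2 : ℝ)):ℂ) by push_cast; field_simp,
      ← Complex.ofReal_exp]
    norm_cast
  -- the triple integrand is integrable
  set F : ℝ → ℝ × ℝ → ℂ := fun ξ p =>
    ((Real.exp (-ε * ξ^2) : ℝ) : ℂ) *
      ((Complex.exp (-Complex.I * p.1 * ξ) * u₁ p.1) *
       (Complex.exp (Complex.I * p.2 * ξ) * (starRingEnd ℂ) (u₁ p.2))) with hFdef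
  have hFnorm : ∀ ξ p, ‖F ξ p‖ = Real.exp (-ε * ξ^2) * (‖u₁ p.1‖ * ‖u₁ p.2‖) := by
    intro ξ p
    have e1 : ‖Complex.exp (-Complex.I * (p.1:ℂ) * ξ)‖ = 1 := by
      rw [Complex.norm_exp]; simp [Complex.mul_re]
    have e2 : ‖Complex.exp (Complex.I * (p.2:ℂ) * ξ)‖ = 1 := by
      rw [Complex.norm_exp]; simp [Complex.mul_re]
    simp only [hFdef, norm_mul, e1, e2, Complex.norm_real, Real.norm_eq_abs,
      RCLike.norm_conj]
    rw [_root_.abs_of_nonneg (Real.exp_pos _).le]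
    ring
  have hFint : Integrable (Function.uncurry F) (volume.prod (volume.prod volume)) := by
    have hb : Integrable (fun q : ℝ × (ℝ × ℝ) =>
        Real.exp (-ε * q.1^2) * (‖u₁ q.2.1‖ * ‖u₁ q.2.2‖)) (volume.prod (volume.prod volume)) :=
      (integrable_exp_neg_mul_sq hε).mul_prod (hu₁.norm.mul_prod hu₁.norm)
    refine hb.mono ?_ ?_
    · apply AEStronglyMeasurable.mul
      · exact ((Complex.continuous_ofReal.comp (by fun_prop)).aestronglyMeasurable)
      apply AEStronglyMeasurable.mul
      · exact (Complex.continuous_exp.comp (by fun_prop)).aestronglyMeasurable.mul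
          ((hu₁.1.comp_fst (ν := volume)).comp_snd (μ := volume))
      · exact (Complex.continuous_exp.comp (by fun_prop)).aestronglyMeasurable.mul
          ((hconj.comp_snd (μ := volume)).comp_snd (μ := volume))
    · filter_upwards with q
      rw [Function.uncurry, hFnorm]
      exact le_abs_self _
  have hgp : Continuous fun p : ℝ × ℝ => g (p.2 - p.1) := hgc.comp (continuous_snd.sub continuous_fst)
  have hnormsq : AEStronglyMeasurable (fun x : ℝ => ‖u₁ x‖ ^ 2 / 2) volume :=
    ((continuous_pow 2).div_const 2).comp_aestronglyMeasurable hu₁.1.norm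
  have hP1 : Integrable (fun p : ℝ × ℝ => ‖u₁ p.1‖ ^ 2 / 2 * g (p.2 - p.1))
      (volume.prod volume) := by
    refine (integrable_prod_iff ?_).2 ⟨?_, ?_⟩
    · exact (hnormsq.comp_fst).mul hgp.aestronglyMeasurable
    · filter_upwards with x
      exact (hgint.comp_sub_right x).const_mul _
    · refine ((hN2.div_const 2).const_mul (2 * π)).congr ?_
      filter_upwards with x
      have h2 : (∫ y : ℝ, ‖u₁ x‖ ^ 2 / 2 * g (y - x)) = 2 * π * (‖u₁ x‖ ^ 2 / 2) := by
        rw [integral_const_mul, integral_sub_right_eq_self (fun z => g z) x, hgtot]; ring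
      rw [← h2]
      apply integral_congr_ae
      filter_upwards with y
      exact (Real.norm_of_nonneg (by positivity)).symm
  have hP2 : Integrable (fun p : ℝ × ℝ => ‖u₁ p.2‖ ^ 2 / 2 * g (p.2 - p.1))
      (volume.prod volume) := by
    refine (integrable_prod_iff' ?_).2 ⟨?_, ?_⟩
    · exact (hnormsq.comp_snd).mul hgp.aestronglyMeasurable
    · filter_upwards with y
      exact (hgint.comp_sub_left y).const_mul _
    · refine ((hN2.div_const 2).const_mul (2 * π)).congr ?_
      filter_upwards with y
      have h2 : (∫ x : ℝ, ‖u₁ y‖ ^ 2 / 2 * g (y - x)) = 2 * π * (‖u₁ y‖ ^ 2 / 2) := by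
        rw [integral_const_mul, integral_sub_left_eq_self (fun z => g z) volume y, hgtot]; ring
      rw [← h2]
      apply integral_congr_ae
      filter_upwards with x
      exact (Real.norm_of_nonneg (by positivity)).symm
  have hP1eval : ∫ p : ℝ × ℝ, ‖u₁ p.1‖ ^ 2 / 2 * g (p.2 - p.1) ∂(volume.prod volume)
      = π * ∫ x : ℝ, ‖u₁ x‖ ^ 2 := by
    rw [integral_prod _ hP1]
    have : ∀ x : ℝ, (∫ y : ℝ, ‖u₁ x‖ ^ 2 / 2 * g (y - x)) = 2 * π * (‖u₁ x‖ ^ 2 / 2) := by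
      intro x
      rw [integral_const_mul, integral_sub_right_eq_self (fun z => g z) x, hgtot]; ring
    simp only [this]
    rw [integral_const_mul, integral_div]
    ring
  have hP2eval : ∫ p : ℝ × ℝ, ‖u₁ p.2‖ ^ 2 / 2 * g (p.2 - p.1) ∂(volume.prod volume)
      = π * ∫ x : ℝ, ‖u₁ x‖ ^ 2 := by
    rw [integral_prod_symm _ hP2]
    have : ∀ y : ℝ, (∫ x : ℝ, ‖u₁ y‖ ^ 2 / 2 * g (y - x)) = 2 * π * (‖u₁ y‖ ^ 2 / 2) := by
      intro y
      rw [integral_const_mul, integral_sub_left_eq_self (fun z => g z) volume y, hgtot]; ring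
    simp only [this]
    rw [integral_const_mul, integral_div]
    ring
  -- key identity
  have step1 : ∀ ξ : ℝ, ((‖u1hat ξ‖ ^ 2 * Real.exp (-ε * ξ ^ 2) : ℝ) : ℂ)
      = ∫ p : ℝ × ℝ, F ξ p ∂(volume.prod volume) := by
    intro ξ
    have hc : ((‖u1hat ξ‖ ^ 2 : ℝ) : ℂ) = u1hat ξ * (starRingEnd ℂ) (u1hat ξ) := by
      rw [Complex.mul_conj, Complex.normSq_eq_norm_sq]
    have hconj_int : (starRingEnd ℂ) (u1hat ξ)
        = ∫ y : ℝ, Complex.exp (Complex.I * y * ξ) * (starRingEnd ℂ) (u₁ y) := by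
      rw [hu1hat, ← integral_conj]
      congr 1; ext y
      rw [map_mul, ← Complex.exp_conj]
      congr 2
      simp [map_mul]
    rw [Complex.ofReal_mul, hc, hconj_int, hu1hat, ← integral_prod_mul, mul_comm,
      ← integral_const_mul]
  have key : ((∫ ξ : ℝ, ‖u1hat ξ‖ ^ 2 * Real.exp (-ε * ξ ^ 2) : ℝ) : ℂ)
      = ∫ p : ℝ × ℝ, (u₁ p.1 * (starRingEnd ℂ) (u₁ p.2)) * ((g (p.2 - p.1) : ℝ) : ℂ)
          ∂(volume.prod volume) := by
    calc ((∫ ξ : ℝ, ‖u1hat ξ‖ ^ 2 * Real.exp (-ε * ξ ^ 2) : ℝ) : ℂ)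
        = ∫ ξ : ℝ, ((‖u1hat ξ‖ ^ 2 * Real.exp (-ε * ξ ^ 2) : ℝ) : ℂ) := integral_ofReal.symm
      _ = ∫ ξ : ℝ, ∫ p : ℝ × ℝ, F ξ p ∂(volume.prod volume) := by simp only [step1]
      _ = ∫ p : ℝ × ℝ, ∫ ξ : ℝ, F ξ p ∂volume ∂(volume.prod volume) :=
          integral_integral_swap hFint
      _ = ∫ p : ℝ × ℝ, (u₁ p.1 * (starRingEnd ℂ) (u₁ p.2)) * ((g (p.2 - p.1) : ℝ) : ℂ)
          ∂(volume.prod volume) := by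
          apply integral_congr_ae
          filter_upwards with p
          have hFp : ∀ ξ : ℝ, F ξ p = (u₁ p.1 * (starRingEnd ℂ) (u₁ p.2)) *
              (Complex.exp (Complex.I * ((p.2 : ℂ) - p.1) * ξ) *
                Complex.exp (-(ε:ℂ) * ξ ^ 2)) := by
            intro ξ
            have hre : ((Real.exp (-ε * ξ ^ 2) : ℝ) : ℂ) = Complex.exp (-(ε:ℂ) * ξ ^ 2) := by
              rw [Complex.ofReal_exp]; norm_cast
            have hexp : Complex.exp (-Complex.I * p.1 * ξ) * Complex.exp (Complex.I * p.2 * ξ)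
                = Complex.exp (Complex.I * ((p.2 : ℂ) - p.1) * ξ) := by
              rw [← Complex.exp_add]; congr 1; ring
            simp only [hFdef]
            rw [hre, ← hexp]
            ring
          simp only [hFp]
          rw [integral_const_mul, hinner p.1 p.2]
  -- final chain
  have habs : ∫ ξ : ℝ, ‖u1hat ξ‖ ^ 2 * Real.exp (-ε * ξ ^ 2)
      ≤ ∫ p : ℝ × ℝ, ‖u₁ p.1‖ * ‖u₁ p.2‖ * g (p.2 - p.1) ∂(volume.prod volume) := by
    have h1 : ∫ ξ : ℝ, ‖u1hat ξ‖ ^ 2 * Real.exp (-ε * ξ ^ 2)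
        = (∫ p : ℝ × ℝ, (u₁ p.1 * (starRingEnd ℂ) (u₁ p.2)) * ((g (p.2 - p.1) : ℝ) : ℂ)
            ∂(volume.prod volume)).re := by
      rw [← key, Complex.ofReal_re]
    rw [h1]
    refine (Complex.re_le_norm _).trans ?_
    refine (norm_integral_le_integral_norm _).trans_eq ?_
    congr 1; ext p
    rw [norm_mul, norm_mul, RCLike.norm_conj, Complex.norm_real, Real.norm_eq_abs,
      _root_.abs_of_nonneg (hg0 _)]
  have hsplit : ∫ p : ℝ × ℝ, ‖u₁ p.1‖ * ‖u₁ p.2‖ * g (p.2 - p.1) ∂(volume.prod volume)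
      ≤ ∫ p : ℝ × ℝ, (‖u₁ p.1‖ ^ 2 / 2 * g (p.2 - p.1) + ‖u₁ p.2‖ ^ 2 / 2 * g (p.2 - p.1))
          ∂(volume.prod volume) := by
    refine integral_mono_of_nonneg ?_ (hP1.add hP2) ?_
    · filter_upwards with p
      positivity
    · filter_upwards with p
      have hab : ‖u₁ p.1‖ * ‖u₁ p.2‖ ≤ ‖u₁ p.1‖ ^ 2 / 2 + ‖u₁ p.2‖ ^ 2 / 2 := by
        nlinarith [sq_nonneg (‖u₁ p.1‖ - ‖u₁ p.2‖)]
      have := mul_le_mul_of_nonneg_right hab (hg0 (p.2 - p.1))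
      calc ‖u₁ p.1‖ * ‖u₁ p.2‖ * g (p.2 - p.1)
          ≤ (‖u₁ p.1‖ ^ 2 / 2 + ‖u₁ p.2‖ ^ 2 / 2) * g (p.2 - p.1) := this
        _ = ‖u₁ p.1‖ ^ 2 / 2 * g (p.2 - p.1) + ‖u₁ p.2‖ ^ 2 / 2 * g (p.2 - p.1) := by ring
  calc ∫ ξ : ℝ, ‖u1hat ξ‖ ^ 2 * Real.exp (-ε * ξ ^ 2)
      ≤ ∫ p : ℝ × ℝ, (‖u₁ p.1‖ ^ 2 / 2 * g (p.2 - p.1) + ‖u₁ p.2‖ ^ 2 / 2 * g (p.2 - p.1))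
          ∂(volume.prod volume) := habs.trans hsplit
    _ = π * (∫ x : ℝ, ‖u₁ x‖ ^ 2) + π * ∫ x : ℝ, ‖u₁ x‖ ^ 2 := by
        rw [integral_add hP1 hP2, hP1eval, hP2eval]
    _ = 2 * π * ∫ x : ℝ, ‖u₁ x‖ ^ 2 := by ring

lemma u1hat_sq_integrable (u₁ : ℝ → ℂ) (hu₁ : Integrable u₁) (hu₁2 : MemLp u₁ 2)
    (u1hat : ℝ → ℂ)
    (hu1hat : ∀ ξ, u1hat ξ = ∫ x : ℝ, Complex.exp (-Complex.I * x * ξ) * u₁ x) :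
    Integrable (fun ξ : ℝ => ‖u1hat ξ‖ ^ 2) := by
  have hcont : Continuous u1hat := u1hat_cont u₁ hu₁ u1hat hu1hat
  have hM : ∀ ξ, ‖u1hat ξ‖ ≤ ∫ x, ‖u₁ x‖ := u1hat_bound u₁ u1hat hu1hat
  set M := ∫ x : ℝ, ‖u₁ x‖ with hMdef
  have hM0 : 0 ≤ M := integral_nonneg fun x => norm_nonneg _
  set C := 2 * π * ∫ x : ℝ, ‖u₁ x‖ ^ 2 with hC
  have hfn_int : ∀ n : ℕ,
      Integrable (fun ξ : ℝ => ‖u1hat ξ‖ ^ 2 * Real.exp (-(1/(n+1)) * ξ ^ 2)) := by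
    intro n
    have hb : Integrable (fun ξ : ℝ => M ^ 2 * Real.exp (-(1/(n+1)) * ξ ^ 2)) :=
      (integrable_exp_neg_mul_sq (by positivity)).const_mul _
    refine hb.mono (((continuous_pow 2).comp hcont.norm).mul (by fun_prop)).aestronglyMeasurable ?_
    filter_upwards with ξ
    rw [Real.norm_eq_abs, Real.norm_eq_abs, abs_of_nonneg (by positivity),
      abs_of_nonneg (by positivity)]
    exact mul_le_mul_of_nonneg_right
      (pow_le_pow_left₀ (norm_nonneg _) (hM ξ) 2) (Real.exp_pos _).le
  have hbound : ∀ n : ℕ,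
      ∫⁻ ξ : ℝ, ENNReal.ofReal (‖u1hat ξ‖ ^ 2 * Real.exp (-(1/(n+1)) * ξ ^ 2))
        ≤ ENNReal.ofReal C := by
    intro n
    rw [← ofReal_integral_eq_lintegral_ofReal (hfn_int n)
      (by filter_upwards with ξ; positivity)]
    exact ENNReal.ofReal_le_ofReal (gaussian_bound u₁ hu₁ hu₁2 u1hat hu1hat (by positivity))
  have hmono : Monotone fun n : ℕ =>
      fun ξ : ℝ => ENNReal.ofReal (‖u1hat ξ‖ ^ 2 * Real.exp (-(1/(n+1)) * ξ ^ 2)) := by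
    intro n m hnm
    intro ξ
    apply ENNReal.ofReal_le_ofReal
    apply mul_le_mul_of_nonneg_left _ (by positivity)
    apply Real.exp_le_exp.2
    have h1 : (1:ℝ)/(m+1) ≤ 1/(n+1) := by
      apply one_div_le_one_div_of_le (by positivity)
      exact_mod_cast Nat.add_le_add_right hnm 1
    nlinarith [sq_nonneg ξ]
  have hsup : ∀ ξ : ℝ,
      (⨆ n : ℕ, ENNReal.ofReal (‖u1hat ξ‖ ^ 2 * Real.exp (-(1/(n+1)) * ξ ^ 2)))
        = ENNReal.ofReal (‖u1hat ξ‖ ^ 2) := by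
    intro ξ
    have hreal : Filter.Tendsto (fun n : ℕ => ‖u1hat ξ‖ ^ 2 * Real.exp (-(1/(n+1)) * ξ ^ 2))
        Filter.atTop (nhds (‖u1hat ξ‖ ^ 2)) := by
      have h0 : Filter.Tendsto (fun n : ℕ => -(1/((n:ℝ)+1)) * ξ ^ 2) Filter.atTop (nhds 0) := by
        have := tendsto_one_div_add_atTop_nhds_zero_nat (𝕜 := ℝ)
        have := (this.neg).mul_const (ξ ^ 2)
        simpa using this
      have := ((Real.continuous_exp.tendsto 0).comp h0).const_mul (‖u1hat ξ‖ ^ 2)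
      simpa using this
    have hlim := (ENNReal.continuous_ofReal.tendsto _).comp hreal
    exact tendsto_nhds_unique (tendsto_atTop_iSup fun n m h => hmono h ξ) hlim
  have hmeas : ∀ n : ℕ, Measurable fun ξ : ℝ =>
      ENNReal.ofReal (‖u1hat ξ‖ ^ 2 * Real.exp (-(1/(n+1)) * ξ ^ 2)) := by
    intro n
    exact (((hcont.norm.pow 2).mul (by fun_prop)).measurable).ennreal_ofReal
  have hkey : ∫⁻ ξ : ℝ, ENNReal.ofReal (‖u1hat ξ‖ ^ 2) ≤ ENNReal.ofReal C := by
    calc ∫⁻ ξ : ℝ, ENNReal.ofReal (‖u1hat ξ‖ ^ 2)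
        = ∫⁻ ξ : ℝ, ⨆ n : ℕ, ENNReal.ofReal (‖u1hat ξ‖ ^ 2 * Real.exp (-(1/(n+1)) * ξ ^ 2)) :=
          lintegral_congr fun ξ => (hsup ξ).symm
      _ = ⨆ n : ℕ, ∫⁻ ξ : ℝ, ENNReal.ofReal (‖u1hat ξ‖ ^ 2 * Real.exp (-(1/(n+1)) * ξ ^ 2)) :=
          lintegral_iSup hmeas hmono
      _ ≤ ENNReal.ofReal C := iSup_le hbound
  refine ⟨((continuous_pow 2).comp hcont.norm).aestronglyMeasurable, ?_⟩
  rw [hasFiniteIntegral_iff_ofReal (by filter_upwards with ξ; positivity)]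
  exact lt_of_le_of_lt hkey ENNReal.ofReal_lt_top

set_option maxHeartbeats 1600000

theorem upper_bound_critical
    (u₁ : ℝ → ℂ) (hu₁ : Integrable u₁) (hu₁2 : MemLp u₁ 2)
    (u0hat : ℝ → ℂ) (hu0 : MemLp u0hat 2)
    (u1hat : ℝ → ℂ)
    (hu1hat : ∀ ξ, u1hat ξ = ∫ x : ℝ, Complex.exp (-Complex.I * x * ξ) * u₁ x)
    (uhat : ℝ → ℝ → ℂ)
    (huhat : ∀ t ξ, uhat t ξ =
      ((Real.sin (t * |ξ| ^ (1/2 : ℝ)) / |ξ| ^ (1/2 : ℝ) : ℝ) : ℂ) * u1hat ξ +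
      ((Real.cos (t * |ξ| ^ (1/2 : ℝ)) : ℝ) : ℂ) * u0hat ξ) :
    ∃ T > 1, ∀ t ≥ T,
      (∫ ξ : ℝ, ‖uhat t ξ‖ ^ 2) ≤
        4 * ((∫ ξ : ℝ, ‖u0hat ξ‖ ^ 2) + (∫ ξ : ℝ, ‖u1hat ξ‖ ^ 2) +
          (∫ x : ℝ, ‖u₁ x‖) ^ 2) * Real.log t := by
  have hT1 : (1:ℝ) < Real.exp (Real.exp 4) := by
    rw [show (1:ℝ) = Real.exp 0 from (Real.exp_zero).symm]
    exact Real.exp_lt_exp.2 (Real.exp_pos 4)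
  refine ⟨Real.exp (Real.exp 4), hT1, ?_⟩
  intro t ht
  have ht1 : (1:ℝ) < t := lt_of_lt_of_le hT1 ht
  have ht0 : (0:ℝ) < t := by linarith
  set L := Real.log t with hLdef
  have hLge : Real.exp 4 ≤ L := by
    rw [hLdef, ← Real.log_exp (Real.exp 4)]
    exact Real.log_le_log (Real.exp_pos _) ht
  have hL5 : (5:ℝ) ≤ L := le_trans (by nlinarith [Real.add_one_le_exp (4:ℝ)]) hLge
  have hL0 : (0:ℝ) < L := by linarith
  have hlogL : (4:ℝ) ≤ Real.log L := by
    rw [← Real.log_exp 4]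
    exact Real.log_le_log (Real.exp_pos 4) hLge
  have hlogL_le : Real.log L ≤ L := Real.log_le_self hL0.le
  set ε := Real.log L / (4 * L) with hεdef
  have hε0 : 0 < ε := div_pos (by linarith) (by linarith)
  have hε1 : ε ≤ 1 := by
    rw [hεdef, div_le_one (by linarith)]
    linarith
  have hεL : ε * (4 * L) = Real.log L := div_mul_cancel₀ _ (by positivity)
  set M := ∫ x : ℝ, ‖u₁ x‖ with hMdef
  have hM0 : 0 ≤ M := integral_nonneg fun x => norm_nonneg _
  set A := ∫ ξ : ℝ, ‖u0hat ξ‖ ^ 2 with hAdef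
  set B := ∫ ξ : ℝ, ‖u1hat ξ‖ ^ 2 with hBdef
  have hA0 : 0 ≤ A := integral_nonneg fun ξ => sq_nonneg _
  have hB0 : 0 ≤ B := integral_nonneg fun ξ => sq_nonneg _
  have hBint : Integrable (fun ξ : ℝ => ‖u1hat ξ‖ ^ 2) :=
    u1hat_sq_integrable u₁ hu₁ hu₁2 u1hat hu1hat
  have hAint : Integrable (fun ξ : ℝ => ‖u0hat ξ‖ ^ 2) := by
    have := hu0.integrable_norm_rpow two_ne_zero ENNReal.ofNat_ne_top
    simpa [ENNReal.toReal_ofNat, Real.rpow_natCast] using this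
  have hMb : ∀ ξ, ‖u1hat ξ‖ ≤ M := u1hat_bound u₁ u1hat hu1hat
  -- region endpoints
  set a := (t^2)⁻¹ with hadef
  set b := L⁻¹ with hbdef
  have ha0 : 0 < a := by positivity
  have hb0 : 0 < b := by positivity
  have hab : a ≤ b := by
    rw [hadef, hbdef]
    apply inv_anti₀ hL0
    nlinarith [Real.log_le_self ht0.le]
  -- pieces
  set S : Set ℝ := Set.Ico (-b) (-a) ∪ Set.Ioc a b with hSdef
  have hSmeas : MeasurableSet S := (measurableSet_Ico).union measurableSet_Ioc
  set g1 : ℝ → ℝ := Set.indicator (Set.Icc (-a) a) (fun _ => (1+ε) * (t^2 * M^2)) with hg1def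
  set g2 : ℝ → ℝ := Set.indicator S (fun ξ => (1+ε) * (M^2 * |ξ|⁻¹)) with hg2def
  set g3 : ℝ → ℝ := fun ξ => 2 * L * ‖u1hat ξ‖ ^ 2 with hg3def
  set g4 : ℝ → ℝ := fun ξ => (1 + ε⁻¹) * ‖u0hat ξ‖ ^ 2 with hg4def
  have hg1nn : ∀ ξ, 0 ≤ g1 ξ := fun ξ => Set.indicator_nonneg (fun x _ => by positivity) ξ
  have hg2nn : ∀ ξ, 0 ≤ g2 ξ := fun ξ => Set.indicator_nonneg (fun x _ => by positivity) ξ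
  have hg3nn : ∀ ξ, 0 ≤ g3 ξ := fun ξ => by positivity
  have hg4nn : ∀ ξ, 0 ≤ g4 ξ := fun ξ => by positivity
  -- pointwise bound
  have hsq : ∀ x y : ℝ, (x + y)^2 ≤ (1+ε)*x^2 + (1+ε⁻¹)*y^2 := by
    intro x y
    nlinarith [mul_nonneg (inv_nonneg.2 hε0.le) (sq_nonneg (ε*x - y)),
      mul_inv_cancel₀ hε0.ne', hε0.le, sq_nonneg (ε*x - y)]
  have hs_bound : ∀ ξ : ℝ, ‖uhat t ξ‖ ≤
      |Real.sin (t * |ξ| ^ (1/2:ℝ)) / |ξ| ^ (1/2:ℝ)| * ‖u1hat ξ‖ + ‖u0hat ξ‖ := by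
    intro ξ
    rw [huhat]
    refine (norm_add_le _ _).trans ?_
    rw [norm_mul, norm_mul, Complex.norm_real, Complex.norm_real, Real.norm_eq_abs,
      Real.norm_eq_abs]
    have := Real.abs_cos_le_one (t * |ξ| ^ (1/2:ℝ))
    nlinarith [norm_nonneg (u0hat ξ), abs_nonneg (Real.sin (t * |ξ| ^ (1/2:ℝ)) / |ξ| ^ (1/2:ℝ)),
      norm_nonneg (u1hat ξ)]
  have hpt : ∀ ξ : ℝ, ‖uhat t ξ‖ ^ 2 ≤ g1 ξ + g2 ξ + g3 ξ + g4 ξ := by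
    intro ξ
    set r := |ξ| ^ (1/2:ℝ) with hrdef
    set s := Real.sin (t * r) / r with hsdef
    have hr0 : 0 ≤ r := Real.rpow_nonneg (abs_nonneg ξ) _
    have h1 : ‖uhat t ξ‖ ^ 2 ≤ (1+ε) * (|s| * ‖u1hat ξ‖)^2 + (1+ε⁻¹) * ‖u0hat ξ‖^2 :=
      le_trans (pow_le_pow_left₀ (norm_nonneg _) (hs_bound ξ) 2) (hsq _ _)
    have hst : s ^ 2 ≤ t ^ 2 := by
      rcases eq_or_lt_of_le hr0 with h | h
      · rw [hsdef, ← h]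
        simp
        positivity
      · have habs : |s| ≤ t := by
          rw [hsdef, abs_div, abs_of_pos h, div_le_iff₀ h]
          calc |Real.sin (t*r)| ≤ |t*r| := Real.abs_sin_le_abs
            _ = t * r := abs_of_nonneg (mul_nonneg ht0.le h.le)
        calc s^2 = |s|^2 := (sq_abs s).symm
          _ ≤ t^2 := pow_le_pow_left₀ (abs_nonneg _) habs 2
    have hsinv : ξ ≠ 0 → s ^ 2 ≤ |ξ|⁻¹ := by
      intro hξ
      have habs : 0 < |ξ| := abs_pos.2 hξ
      have hr2 : r^2 = |ξ| := by
        rw [hrdef, ← Real.rpow_natCast (|ξ| ^ ((1:ℝ)/2)) 2, ← Real.rpow_mul (abs_nonneg ξ)]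
        norm_num
      rw [hsdef, div_pow, hr2, div_eq_mul_inv]
      calc Real.sin (t*r)^2 * |ξ|⁻¹ ≤ 1 * |ξ|⁻¹ :=
            mul_le_mul_of_nonneg_right (Real.sin_sq_le_one _) (inv_nonneg.2 habs.le)
        _ = |ξ|⁻¹ := one_mul _
    have ha2 : (|s| * ‖u1hat ξ‖)^2 = s^2 * ‖u1hat ξ‖^2 := by
      rw [mul_pow, sq_abs]
    rcases le_or_gt |ξ| a with hcase1 | hcase1
    · have hmem : ξ ∈ Set.Icc (-a) a := by
        rw [Set.mem_Icc]; exact abs_le.1 hcase1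
      have hg1v : g1 ξ = (1+ε) * (t^2 * M^2) := Set.indicator_of_mem hmem _
      have hterm : (1+ε) * (|s| * ‖u1hat ξ‖)^2 ≤ (1+ε) * (t^2 * M^2) := by
        apply mul_le_mul_of_nonneg_left _ (by positivity)
        rw [ha2]
        exact mul_le_mul hst (pow_le_pow_left₀ (norm_nonneg _) (hMb ξ) 2)
          (sq_nonneg _) (sq_nonneg t)
      have := hg2nn ξ; have := hg3nn ξ
      rw [hg1v]
      simp only [hg4def]
      linarith [h1, hterm]
    · rcases le_or_gt |ξ| b with hcase2 | hcase2
      · have hξ0 : ξ ≠ 0 := by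
          intro h; rw [h, abs_zero] at hcase1; linarith
        have hmem : ξ ∈ S := by
          rw [hSdef]
          rcases lt_or_ge ξ 0 with hneg | hpos
          · left
            rw [abs_of_neg hneg] at hcase1 hcase2
            constructor <;> [linarith; linarith]
          · right
            rw [abs_of_nonneg hpos] at hcase1 hcase2
            exact ⟨hcase1, hcase2⟩
        have hg2v : g2 ξ = (1+ε) * (M^2 * |ξ|⁻¹) := Set.indicator_of_mem hmem _
        have hterm : (1+ε) * (|s| * ‖u1hat ξ‖)^2 ≤ (1+ε) * (M^2 * |ξ|⁻¹) := by
          apply mul_le_mul_of_nonneg_left _ (by positivity)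
          rw [ha2]
          calc s^2 * ‖u1hat ξ‖^2 ≤ |ξ|⁻¹ * M^2 :=
                mul_le_mul (hsinv hξ0) (pow_le_pow_left₀ (norm_nonneg _) (hMb ξ) 2)
                  (sq_nonneg _) (by positivity)
            _ = M^2 * |ξ|⁻¹ := mul_comm _ _
        have := hg1nn ξ; have := hg3nn ξ
        rw [hg2v]
        simp only [hg4def]
        linarith [h1, hterm]
      · have hξ0 : ξ ≠ 0 := by
          intro h; rw [h, abs_zero] at hcase2; linarith
        have hinv : |ξ|⁻¹ ≤ L := by
          rw [hbdef] at hcase2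
          calc |ξ|⁻¹ ≤ (L⁻¹)⁻¹ := inv_anti₀ (by positivity) hcase2.le
            _ = L := inv_inv L
        have hterm : (1+ε) * (|s| * ‖u1hat ξ‖)^2 ≤ g3 ξ := by
          simp only [hg3def]
          rw [ha2]
          calc (1+ε) * (s^2 * ‖u1hat ξ‖^2) ≤ 2 * (L * ‖u1hat ξ‖^2) := by
                apply mul_le_mul (by linarith) _ (by positivity) (by norm_num)
                exact mul_le_mul_of_nonneg_right ((hsinv hξ0).trans hinv) (sq_nonneg _)
            _ = 2 * L * ‖u1hat ξ‖^2 := by ring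
        have := hg1nn ξ; have := hg2nn ξ
        simp only [hg4def]
        linarith [h1, hterm]
  -- integrability of the pieces
  have habs_int : ∀ c d : ℝ, (0:ℝ) ∉ Set.Icc c d →
      IntegrableOn (fun ξ : ℝ => |ξ|⁻¹) (Set.Icc c d) := by
    intro c d h0
    apply ContinuousOn.integrableOn_compact isCompact_Icc
    apply ContinuousOn.inv₀ continuous_abs.continuousOn
    intro x hx hax
    rw [abs_eq_zero] at hax
    exact h0 (hax ▸ hx)
  have hIOneg : IntegrableOn (fun ξ : ℝ => |ξ|⁻¹) (Set.Ico (-b) (-a)) :=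
    (habs_int (-b) (-a) (by rw [Set.mem_Icc]; push_neg; intro h; linarith)).mono_set
      Set.Ico_subset_Icc_self
  have hIOpos : IntegrableOn (fun ξ : ℝ => |ξ|⁻¹) (Set.Ioc a b) :=
    (habs_int a b (by rw [Set.mem_Icc]; push_neg; intro h; linarith)).mono_set
      Set.Ioc_subset_Icc_self
  have hg1int : Integrable g1 := by
    rw [hg1def, integrable_indicator_iff measurableSet_Icc]
    exact integrableOn_const (by rw [Real.volume_Icc]; exact ENNReal.ofReal_ne_top)
  have hg2int : Integrable g2 := by
    rw [hg2def, integrable_indicator_iff hSmeas]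
    have : IntegrableOn (fun ξ : ℝ => |ξ|⁻¹) S := by
      rw [hSdef]; exact hIOneg.union hIOpos
    have h2 : IntegrableOn (fun ξ : ℝ => (1+ε) * (M^2 * |ξ|⁻¹)) S :=
      ((this.const_mul (M^2)).const_mul (1+ε))
    exact h2
  have hg3int : Integrable g3 := hBint.const_mul _
  have hg4int : Integrable g4 := hAint.const_mul _
  -- main comparison
  have hmain : (∫ ξ : ℝ, ‖uhat t ξ‖ ^ 2) ≤ ∫ ξ : ℝ, (g1 ξ + g2 ξ + g3 ξ + g4 ξ) := by
    apply integral_mono_of_nonneg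
    · filter_upwards with ξ; positivity
    · exact ((hg1int.add hg2int).add hg3int).add hg4int
    · filter_upwards with ξ; exact hpt ξ
  -- evaluate the integrals
  have hI1 : ∫ ξ : ℝ, g1 ξ = 2 * (1+ε) * M^2 := by
    rw [hg1def, integral_indicator_const _ measurableSet_Icc, Real.volume_real_Icc, smul_eq_mul,
      max_eq_left (by linarith), hadef]
    field_simp
    ring
  have hdisj : Disjoint (Set.Ico (-b) (-a)) (Set.Ioc a b) := by
    rw [Set.disjoint_iff_inter_eq_empty]
    apply Set.eq_empty_of_forall_notMem
    rintro x ⟨⟨-, h1⟩, h2, -⟩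
    linarith
  have hlogba : Real.log (b / a) = 2 * L - Real.log L := by
    rw [Real.log_div hb0.ne' ha0.ne', hbdef, hadef, Real.log_inv, Real.log_inv, Real.log_pow,
      ← hLdef]
    push_cast
    ring
  have hpos_val : ∫ ξ in Set.Ioc a b, |ξ|⁻¹ = 2 * L - Real.log L := by
    rw [setIntegral_congr_fun measurableSet_Ioc
      (g := fun ξ : ℝ => ξ⁻¹) (fun x hx => by rw [abs_of_pos (lt_trans ha0 hx.1)]),
      ← intervalIntegral.integral_of_le hab,
      integral_inv (by rw [Set.uIcc_of_le hab, Set.mem_Icc]; push_neg; intro h; linarith),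
      hlogba]
  have hneg_val : ∫ ξ in Set.Ico (-b) (-a), |ξ|⁻¹ = 2 * L - Real.log L := by
    have hble : -b ≤ -a := by linarith
    rw [integral_Ico_eq_integral_Ioo,
      setIntegral_congr_fun measurableSet_Ioo (g := fun ξ : ℝ => (-ξ)⁻¹)
        (fun x hx => by rw [abs_of_neg (lt_trans hx.2 (by linarith))]),
      ← integral_Ioc_eq_integral_Ioo,
      ← intervalIntegral.integral_of_le hble]
    have hcomp := intervalIntegral.integral_comp_neg (a := a) (b := b) (fun ξ : ℝ => (-ξ)⁻¹)
    simp only [neg_neg] at hcomp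
    rw [← hcomp,
      integral_inv (by rw [Set.uIcc_of_le hab, Set.mem_Icc]; push_neg; intro h; linarith),
      hlogba]
  have hIS : ∫ ξ in S, |ξ|⁻¹ = 2 * (2 * L - Real.log L) := by
    rw [hSdef, setIntegral_union hdisj measurableSet_Ioc hIOneg hIOpos, hneg_val, hpos_val]
    ring
  have hI2 : ∫ ξ : ℝ, g2 ξ = (1+ε) * M^2 * (2 * (2*L - Real.log L)) := by
    rw [hg2def, integral_indicator hSmeas]
    rw [show (fun ξ : ℝ => (1+ε) * (M^2 * |ξ|⁻¹)) = fun ξ : ℝ => ((1+ε) * M^2) * |ξ|⁻¹ by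
      funext ξ; ring]
    rw [integral_const_mul, hIS]
  have hI3 : ∫ ξ : ℝ, g3 ξ = 2 * L * B := by
    rw [hg3def]
    rw [show (fun ξ : ℝ => 2 * L * ‖u1hat ξ‖ ^ 2) = fun ξ : ℝ => (2*L) * ‖u1hat ξ‖ ^ 2 by
      funext ξ; ring]
    rw [integral_const_mul, ← hBdef]
  have hI4 : ∫ ξ : ℝ, g4 ξ = (1 + ε⁻¹) * A := by
    rw [hg4def, integral_const_mul, ← hAdef]
  have hCkey : (1+ε) * (4*L - 2*Real.log L + 2) ≤ 4*L := by
    nlinarith [hεL, hlogL, hε0.le, mul_nonneg hε0.le (show (0:ℝ) ≤ Real.log L by linarith)]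
  have hAkey : 1 + ε⁻¹ ≤ 4 * L := by
    have h1 : ε⁻¹ = (4*L) / Real.log L := by rw [hεdef, inv_div]
    have h2 : (4*L) / Real.log L ≤ L := by
      rw [div_le_iff₀ (by linarith)]
      nlinarith
    linarith
  calc (∫ ξ : ℝ, ‖uhat t ξ‖ ^ 2) ≤ ∫ ξ : ℝ, (g1 ξ + g2 ξ + g3 ξ + g4 ξ) := hmain
    _ = 2*(1+ε)*M^2 + (1+ε)*M^2*(2*(2*L - Real.log L)) + 2*L*B + (1+ε⁻¹)*A := by
        have hfun : (fun ξ : ℝ => g1 ξ + g2 ξ + g3 ξ + g4 ξ) = (g1 + g2 + g3 + g4) := rfl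
        rw [hfun, integral_add' ((hg1int.add hg2int).add hg3int) hg4int,
          integral_add' (hg1int.add hg2int) hg3int, integral_add' hg1int hg2int,
          hI1, hI2, hI3, hI4]
    _ ≤ 4 * (A + B + M^2) * L := by
        nlinarith [mul_le_mul_of_nonneg_left hCkey (sq_nonneg M),
          mul_le_mul_of_nonneg_left hAkey hA0,
          mul_nonneg hB0 hL0.le, mul_nonneg hA0 hL0.le, sq_nonneg M,
          mul_nonneg (sq_nonneg M) hL0.le]
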